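/- Fix α > 0, b > 0 and t ∈ ℝ. Then lim_{n→∞} [ log Γ(nα + √n·b·t) − log Γ(nα) − √n·b·t·log(nα) ] = b²t²/(2α), where Γ is the Gamma function. -/

import Mathlib

open Filter Set Real intervalIntegral
open scoped Topology


-- basic building blocks
lemma lg_diff {v : ℝ} (hv : 0 < v) : DifferentiableAt ℝ (Real.log ∘ Real.Gamma) v := by
  have hG : DifferentiableAt ℝ Real.Gamma v :=
    Real.differentiableAt_Gamma (fun m => by
      have : (0:ℝ) ≤ m := Nat.cast_nonneg m
      intro h; rw [h] at hv; linarith)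
  exact (Real.differentiableAt_log (Real.Gamma_pos_of_pos hv).ne').comp v hG

lemma lg_succ {v : ℝ} (hv : 0 < v) :
    (Real.log ∘ Real.Gamma) (v + 1) - (Real.log ∘ Real.Gamma) v = Real.log v := by
  simp only [Function.comp_apply, Real.Gamma_add_one hv.ne',
    Real.log_mul hv.ne' (Real.Gamma_pos_of_pos hv).ne']
  ring

lemma deriv_lg_le {v : ℝ} (hv : 0 < v) :
    deriv (Real.log ∘ Real.Gamma) v ≤ Real.log v := by
  have h := Real.convexOn_log_Gamma.deriv_le_slope (Set.mem_Ioi.2 hv)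
    (Set.mem_Ioi.2 (by linarith : (0:ℝ) < v + 1)) (by linarith) (lg_diff hv)
  rwa [slope_def_field, show v + 1 - v = 1 by ring, div_one, lg_succ hv] at h

lemma le_deriv_lg {v : ℝ} (hv : 1 < v) :
    Real.log (v - 1) ≤ deriv (Real.log ∘ Real.Gamma) v := by
  have h0 : 0 < v - 1 := by linarith
  have h := Real.convexOn_log_Gamma.slope_le_deriv (Set.mem_Ioi.2 h0)
    (Set.mem_Ioi.2 (by linarith : (0:ℝ) < v)) (by linarith) (lg_diff (by linarith))
  have hs : slope (Real.log ∘ Real.Gamma) (v-1) v = Real.log (v-1) := by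
    rw [slope_def_field, show v - (v-1) = 1 by ring, div_one]
    have := lg_succ h0
    rwa [sub_add_cancel] at this
  rwa [hs] at h


lemma log_intable {x y : ℝ} (hx : 2 ≤ x) (hy : 2 ≤ y) :
    IntervalIntegrable (fun v => Real.log v) MeasureTheory.volume x y := by
  apply ContinuousOn.intervalIntegrable
  intro v hv
  have : 2 ≤ v := le_trans (le_min hx hy) (Set.mem_uIcc.mp hv |>.elim (fun h => (min_le_left x y).trans h.1) (fun h => (min_le_right x y).trans h.1))
  exact (Real.continuousAt_log (by linarith)).continuousWithinAt

lemma log_sub_intable {x y : ℝ} (hx : 2 ≤ x) (hy : 2 ≤ y) :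
    IntervalIntegrable (fun v => Real.log (v - 1)) MeasureTheory.volume x y := by
  apply ContinuousOn.intervalIntegrable
  intro v hv
  have : 2 ≤ v := le_trans (le_min hx hy) (Set.mem_uIcc.mp hv |>.elim (fun h => (min_le_left x y).trans h.1) (fun h => (min_le_right x y).trans h.1))
  exact (ContinuousAt.comp (Real.continuousAt_log (ne_of_gt (by show (0:ℝ) < v - 1; linarith)))
    (continuousAt_id.sub continuousAt_const)).continuousWithinAt

lemma one_sided {x y : ℝ} (hx : 2 ≤ x) (hxy : x ≤ y) :
    (∫ v in x..y, Real.log (v - 1)) ≤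
      (Real.log ∘ Real.Gamma) y - (Real.log ∘ Real.Gamma) x ∧
    (Real.log ∘ Real.Gamma) y - (Real.log ∘ Real.Gamma) x ≤ ∫ v in x..y, Real.log v := by
  have hy : 2 ≤ y := hx.trans hxy
  have hmem : ∀ v ∈ Set.uIcc x y, 2 ≤ v := by
    intro v hv
    rw [Set.uIcc_of_le hxy] at hv
    exact hx.trans hv.1
  have hdiff : ∀ v ∈ Set.uIcc x y, DifferentiableAt ℝ (Real.log ∘ Real.Gamma) v :=
    fun v hv => lg_diff (by have := hmem v hv; linarith)
  have hmono : MonotoneOn (deriv (Real.log ∘ Real.Gamma)) (Set.Ioi 0) :=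
    Real.convexOn_log_Gamma.monotoneOn_deriv (fun v hv => lg_diff hv)
  have hsub : Set.uIcc x y ⊆ Set.Ioi (0:ℝ) := fun v hv => by
    have := hmem v hv; exact Set.mem_Ioi.2 (by linarith)
  have hint : IntervalIntegrable (deriv (Real.log ∘ Real.Gamma)) MeasureTheory.volume x y :=
    (hmono.mono hsub).intervalIntegrable
  have hftc : (∫ v in x..y, deriv (Real.log ∘ Real.Gamma) v)
      = (Real.log ∘ Real.Gamma) y - (Real.log ∘ Real.Gamma) x :=
    integral_deriv_eq_sub hdiff hint
  constructor
  · rw [← hftc]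
    refine integral_mono_on hxy (log_sub_intable hx hy) hint (fun v hv => ?_)
    exact le_deriv_lg (by have := hx.trans hv.1; linarith)
  · rw [← hftc]
    refine integral_mono_on hxy hint (log_intable hx hy) (fun v hv => ?_)
    exact deriv_lg_le (by have := hx.trans hv.1; linarith)

lemma key_ineq {x y : ℝ} (hx : 2 ≤ x) (hy : 2 ≤ y) :
    min (∫ v in x..y, Real.log (v - 1)) (∫ v in x..y, Real.log v) ≤
      (Real.log ∘ Real.Gamma) y - (Real.log ∘ Real.Gamma) x ∧
    (Real.log ∘ Real.Gamma) y - (Real.log ∘ Real.Gamma) x ≤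
      max (∫ v in x..y, Real.log (v - 1)) (∫ v in x..y, Real.log v) := by
  rcases le_total x y with h | h
  · obtain ⟨h1, h2⟩ := one_sided hx h
    exact ⟨(min_le_left _ _).trans h1, h2.trans (le_max_right _ _)⟩
  · obtain ⟨h1, h2⟩ := one_sided hy h
    have e1 : (∫ v in x..y, Real.log (v - 1)) = -(∫ v in y..x, Real.log (v - 1)) :=
      integral_symm y x
    have e2 : (∫ v in x..y, Real.log v) = -(∫ v in y..x, Real.log v) :=
      integral_symm y x
    constructor
    · exact (min_le_right _ _).trans (by rw [e2]; linarith)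
    · exact le_trans (by rw [e1]; linarith) (le_max_left _ _)


lemma log_div_self_tendsto :
    Tendsto (fun u : ℝ => Real.log (1 + u) / u) (𝓝[≠] (0:ℝ)) (𝓝 1) := by
  have hd : HasDerivAt (fun u : ℝ => Real.log (1 + u)) 1 0 := by
    have h1 : HasDerivAt (fun u : ℝ => 1 + u) 1 0 := by
      simpa using (hasDerivAt_id (0:ℝ)).const_add 1
    have h2 := (Real.hasDerivAt_log (by norm_num : (1:ℝ) + 0 ≠ 0)).comp 0 h1
    exact h2.congr_deriv (by norm_num)
  have h := hasDerivAt_iff_tendsto_slope.mp hd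
  refine h.congr' ?_
  filter_upwards [self_mem_nhdsWithin] with u hu
  simp [slope_def_field]

lemma phi_tendsto :
    Tendsto (fun u : ℝ => ((1 + u) * Real.log (1 + u) - u) / u ^ 2)
      (𝓝[≠] (0:ℝ)) (𝓝 (1/2)) := by
  have hIoo : Set.Ioo (-(1/2) : ℝ) (1/2) ∈ 𝓝[≠] (0:ℝ) :=
    mem_nhdsWithin_of_mem_nhds (Ioo_mem_nhds (by norm_num) (by norm_num))
  apply HasDerivAt.lhopital_zero_nhdsNE (f' := fun u => Real.log (1 + u))
    (g' := fun u => 2 * u)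
  · filter_upwards [hIoo] with u hu
    have h0 : (0:ℝ) < 1 + u := by have := hu.1; have := hu.2; simp at *; linarith
    have h1 : HasDerivAt (fun u : ℝ => 1 + u) 1 u := by
      simpa using (hasDerivAt_id u).const_add 1
    have h2 : HasDerivAt (fun u : ℝ => Real.log (1 + u)) (1+u)⁻¹ u := by
      exact ((Real.hasDerivAt_log h0.ne').comp u h1).congr_deriv (mul_one _)
    have h3 := (h1.mul h2).sub (hasDerivAt_id u)
    exact h3.congr_deriv (by rw [one_mul, mul_inv_cancel₀ h0.ne']; ring)
  · filter_upwards with u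
    simpa using hasDerivAt_pow 2 u
  · filter_upwards [self_mem_nhdsWithin] with u hu
    simpa using hu
  · have : ContinuousAt (fun u : ℝ => (1 + u) * Real.log (1 + u) - u) 0 := by
      have : ContinuousAt (fun u : ℝ => Real.log (1 + u)) 0 :=
        (Real.continuousAt_log (by norm_num)).comp (continuousAt_const.add continuousAt_id)
      exact ((continuousAt_const.add continuousAt_id).mul this).sub continuousAt_id
    have h := this.tendsto.mono_left (nhdsWithin_le_nhds (s := {0}ᶜ))
    simpa using h
  · have : Tendsto (fun u : ℝ => u ^ 2) (𝓝 (0:ℝ)) (𝓝 0) := by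
      simpa using (continuous_pow 2).tendsto (0:ℝ)
    exact this.mono_left nhdsWithin_le_nhds
  · have h := (log_div_self_tendsto.div_const 2).congr
      (fun u => by rw [div_div, mul_comm])
    exact h


section aux
variable (α b t : ℝ)

lemma sqrt_nat_tendsto : Tendsto (fun n : ℕ => Real.sqrt n) atTop atTop := by
  have h : Tendsto (fun x : ℝ => Real.sqrt x) atTop atTop := by
    apply tendsto_atTop_atTop.mpr
    intro c
    exact ⟨c^2, fun x hx => by
      calc c ≤ Real.sqrt (c^2) := by
              rcases le_total c 0 with h|h
              · exact h.trans (Real.sqrt_nonneg _)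
              · rw [Real.sqrt_sq h]
           _ ≤ Real.sqrt x := Real.sqrt_le_sqrt hx⟩
  exact h.comp tendsto_natCast_atTop_atTop

lemma x_tendsto (hα : 0 < α) (d : ℝ) :
    Tendsto (fun n : ℕ => (n : ℝ) * α - d) atTop atTop := by
  apply tendsto_atTop_add_const_right
  exact tendsto_natCast_atTop_atTop.atTop_mul_const hα

lemma ratio_tendsto (hα : 0 < α) (d : ℝ) :
    Tendsto (fun n : ℕ => (n : ℝ) / ((n : ℝ) * α - d)) atTop (𝓝 α⁻¹) := by
  have h1 : Tendsto (fun n : ℕ => α - d / (n : ℝ)) atTop (𝓝 α) := by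
    have := tendsto_const_nhds.div_atTop
      (tendsto_natCast_atTop_atTop : Tendsto (Nat.cast : ℕ → ℝ) atTop atTop) (a := d)
    simpa using tendsto_const_nhds.sub this
  have h2 := h1.inv₀ hα.ne'
  apply h2.congr'
  have hxpos := (x_tendsto α hα d).eventually_gt_atTop 0
  filter_upwards [eventually_gt_atTop 0, hxpos] with n hn hx
  have hn' : (0:ℝ) < (n:ℝ) := by exact_mod_cast hn
  have hfrac : α - d / (n:ℝ) = ((n:ℝ) * α - d) / (n:ℝ) := by field_simp
  rw [hfrac, inv_div]

lemma sq_ratio_tendsto (hα : 0 < α) (d : ℝ) :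
    Tendsto (fun n : ℕ => (Real.sqrt n * b * t) ^ 2 / ((n : ℝ) * α - d)) atTop
      (𝓝 (b ^ 2 * t ^ 2 / α)) := by
  have h := (ratio_tendsto α hα d).const_mul (b ^ 2 * t ^ 2)
  have : b ^ 2 * t ^ 2 * α⁻¹ = b ^ 2 * t ^ 2 / α := by rw [div_eq_mul_inv]
  rw [this] at h
  apply h.congr
  intro n
  rw [mul_pow, mul_pow, Real.sq_sqrt (Nat.cast_nonneg n)]
  ring

lemma sinv_tendsto (hb : b ≠ 0) (ht : t ≠ 0) :
    Tendsto (fun n : ℕ => (Real.sqrt n * b * t)⁻¹) atTop (𝓝 0) := by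
  have h := (sqrt_nat_tendsto.inv_tendsto_atTop).mul_const (b⁻¹ * t⁻¹)
  rw [zero_mul] at h
  apply h.congr
  intro n
  simp [Pi.inv_apply, mul_inv]
  ring

lemma u_tendsto (hα : 0 < α) (hb : b ≠ 0) (ht : t ≠ 0) (d : ℝ) :
    Tendsto (fun n : ℕ => Real.sqrt n * b * t / ((n : ℝ) * α - d)) atTop (𝓝 0) := by
  have h := (sq_ratio_tendsto α b t hα d).mul (sinv_tendsto b t hb ht)
  rw [mul_zero] at h
  apply h.congr'
  filter_upwards [eventually_gt_atTop 0,
    (x_tendsto α hα d).eventually_gt_atTop 0] with n hn hx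
  have hs : Real.sqrt n * b * t ≠ 0 := by
    have : (0:ℝ) < Real.sqrt n := Real.sqrt_pos.mpr (by exact_mod_cast hn)
    positivity
  field_simp
end aux


lemma main_aux (α b t : ℝ) (hα : 0 < α) (hb : b ≠ 0) (ht : t ≠ 0) (d : ℝ) :
    Tendsto (fun n : ℕ =>
        (((n : ℝ) * α - d) + Real.sqrt n * b * t)
          * Real.log (1 + Real.sqrt n * b * t / ((n : ℝ) * α - d))
        - Real.sqrt n * b * t) atTop (𝓝 (b ^ 2 * t ^ 2 / (2 * α))) := by
  have hu : Tendsto (fun n : ℕ => Real.sqrt n * b * t / ((n : ℝ) * α - d)) atTop (𝓝 0) :=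
    u_tendsto α b t hα hb ht d
  have hune : ∀ᶠ n : ℕ in atTop, Real.sqrt n * b * t / ((n : ℝ) * α - d) ≠ 0 := by
    filter_upwards [eventually_gt_atTop 0, (x_tendsto α hα d).eventually_gt_atTop 0] with n hn hx
    have hs : Real.sqrt n * b * t ≠ 0 := by
      have : (0:ℝ) < Real.sqrt n := Real.sqrt_pos.mpr (by exact_mod_cast hn)
      positivity
    exact div_ne_zero hs hx.ne'
  have hu' : Tendsto (fun n : ℕ => Real.sqrt n * b * t / ((n : ℝ) * α - d)) atTop
      (𝓝[≠] (0:ℝ)) :=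
    tendsto_nhdsWithin_of_tendsto_nhds_of_eventually_within _ hu hune
  have hphi := phi_tendsto.comp hu'
  have h := (sq_ratio_tendsto α b t hα d).mul hphi
  have hconst : b ^ 2 * t ^ 2 / α * (1/2) = b ^ 2 * t ^ 2 / (2 * α) := by ring
  rw [hconst] at h
  apply h.congr'
  filter_upwards [eventually_gt_atTop 0, (x_tendsto α hα d).eventually_gt_atTop 0] with n hn hx
  set s : ℝ := Real.sqrt n * b * t with hsdef
  set x : ℝ := (n : ℝ) * α - d with hxdef
  have hs : s ≠ 0 := by
    have : (0:ℝ) < Real.sqrt n := Real.sqrt_pos.mpr (by exact_mod_cast hn)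
    rw [hsdef]; positivity
  show s ^ 2 / x * (((1 + s/x) * Real.log (1 + s/x) - s/x) / (s/x) ^ 2) = (x + s) * Real.log (1 + s/x) - s
  set L : ℝ := Real.log (1 + s/x)
  field_simp


-- eventual bounds package
lemma ev_bounds (α b t : ℝ) (hα : 0 < α) (hb : b ≠ 0) (ht : t ≠ 0) :
    ∀ᶠ n : ℕ in atTop, 4 ≤ (n:ℝ) * α ∧ |Real.sqrt n * b * t| ≤ (n:ℝ) * α / 2 := by
  have hx := (x_tendsto α hα 0).eventually_ge_atTop 4
  have hu : Tendsto (fun n : ℕ => |Real.sqrt n * b * t / ((n:ℝ) * α - 0)|) atTop (𝓝 |0|) :=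
    (u_tendsto α b t hα hb ht 0).abs
  rw [abs_zero] at hu
  have hu2 := hu.eventually_lt_const (by norm_num : (0:ℝ) < 1/2)
  filter_upwards [hx, hu2] with n h1 h2
  rw [sub_zero] at h1 h2
  refine ⟨h1, ?_⟩
  have hxpos : (0:ℝ) < (n:ℝ) * α := by linarith
  rw [abs_div, abs_of_pos hxpos, div_lt_iff₀ hxpos] at h2
  linarith

lemma hA (α b t : ℝ) (hα : 0 < α) (hb : b ≠ 0) (ht : t ≠ 0) :
    Tendsto (fun n : ℕ =>
        (∫ v in ((n:ℝ)*α)..((n:ℝ)*α + Real.sqrt n * b * t), Real.log v)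
          - Real.sqrt n * b * t * Real.log ((n:ℝ)*α))
      atTop (𝓝 (b ^ 2 * t ^ 2 / (2 * α))) := by
  have h := main_aux α b t hα hb ht 0
  simp only [sub_zero] at h
  apply h.congr'
  filter_upwards [ev_bounds α b t hα hb ht] with n ⟨h1, h2⟩
  set s : ℝ := Real.sqrt n * b * t with hsdef
  set x : ℝ := (n:ℝ) * α with hxdef
  have hxpos : (0:ℝ) < x := by linarith
  have hy : 2 ≤ x + s := by
    have := neg_abs_le s
    linarith
  have hno : (0:ℝ) ∉ Set.uIcc x (x + s) := by
    intro hmem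
    have := (Set.mem_uIcc.mp hmem)
    rcases this with ⟨h, _⟩ | ⟨h, _⟩ <;> linarith
  have hI : (∫ v in x..(x + s), Real.log v)
      = (x + s) * Real.log (x + s) - x * Real.log x - (x + s) + x :=
    integral_log
  have e1 : 1 + s / x = (x + s) / x := by field_simp
  rw [e1, Real.log_div (by linarith : x + s ≠ 0) hxpos.ne', hI]
  ring

lemma hB (α b t : ℝ) (hα : 0 < α) (hb : b ≠ 0) (ht : t ≠ 0) :
    Tendsto (fun n : ℕ =>
        (∫ v in ((n:ℝ)*α)..((n:ℝ)*α + Real.sqrt n * b * t), Real.log (v - 1))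
          - Real.sqrt n * b * t * Real.log ((n:ℝ)*α))
      atTop (𝓝 (b ^ 2 * t ^ 2 / (2 * α))) := by
  have h1 := main_aux α b t hα hb ht 1
  have hrem : Tendsto (fun n : ℕ =>
      Real.sqrt n * b * t * Real.log (1 + 1 / ((n:ℝ)*α - 1))) atTop (𝓝 0) := by
    have hg : Tendsto (fun n : ℕ => |Real.sqrt n * b * t / ((n:ℝ)*α - 1)|) atTop (𝓝 0) := by
      have := (u_tendsto α b t hα hb ht 1).abs
      rwa [abs_zero] at this
    apply squeeze_zero_norm' _ hg
    filter_upwards [(x_tendsto α hα 1).eventually_gt_atTop 0] with n hx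
    have hinv : (0:ℝ) < 1 / ((n:ℝ)*α - 1) := by positivity
    have hlogle : Real.log (1 + 1 / ((n:ℝ)*α - 1)) ≤ 1 / ((n:ℝ)*α - 1) := by
      have := Real.log_le_sub_one_of_pos (by linarith : (0:ℝ) < 1 + 1 / ((n:ℝ)*α - 1))
      linarith
    have hlognn : 0 ≤ Real.log (1 + 1 / ((n:ℝ)*α - 1)) :=
      Real.log_nonneg (by linarith)
    rw [Real.norm_eq_abs, abs_mul, abs_of_nonneg hlognn, abs_div]
    rw [abs_of_pos hx]
    calc |Real.sqrt n * b * t| * Real.log (1 + 1 / ((n:ℝ)*α - 1))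
        ≤ |Real.sqrt n * b * t| * (1 / ((n:ℝ)*α - 1)) := by
          exact mul_le_mul_of_nonneg_left hlogle (abs_nonneg _)
      _ = |Real.sqrt n * b * t| / ((n:ℝ)*α - 1) := by ring
  have h := h1.sub hrem
  rw [sub_zero] at h
  apply h.congr'
  filter_upwards [ev_bounds α b t hα hb ht] with n ⟨hx4, hs2⟩
  set s : ℝ := Real.sqrt n * b * t with hsdef
  set x : ℝ := (n:ℝ) * α with hxdef
  have hxpos : (0:ℝ) < x := by linarith
  have hx1 : (1:ℝ) < x - 1 + 1 := by linarith
  have hx1' : (0:ℝ) < x - 1 := by linarith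
  have hy1 : (0:ℝ) < x + s - 1 := by
    have := neg_abs_le s
    linarith
  have hno : (0:ℝ) ∉ Set.uIcc (x - 1) (x + s - 1) := by
    intro hmem
    rcases Set.mem_uIcc.mp hmem with ⟨h, _⟩ | ⟨h, _⟩ <;> linarith
  have hI : (∫ v in x..(x + s), Real.log (v - 1))
      = (x + s - 1) * Real.log (x + s - 1) - (x - 1) * Real.log (x - 1)
        - (x + s - 1) + (x - 1) := by
    rw [intervalIntegral.integral_comp_sub_right (fun v => Real.log v) 1]
    exact integral_log
  have e1 : 1 + s / (x - 1) = (x + s - 1) / (x - 1) := by field_simp; ring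
  have e2 : 1 + 1 / (x - 1) = x / (x - 1) := by field_simp; ring
  symm
  show (∫ v in x..(x + s), Real.log (v - 1)) - s * Real.log x
      = (x - 1 + s) * Real.log (1 + s / (x - 1)) - s - s * Real.log (1 + 1 / (x - 1))
  rw [e1, e2, Real.log_div hy1.ne' hx1'.ne', Real.log_div hxpos.ne' hx1'.ne', hI]
  ring


/-- Stirling-type limit: `log Γ(nα + √n·b·t) − log Γ(nα) − √n·b·t·log(nα) → b²t²/(2α)`. -/
theorem stmt_6 (α b t : ℝ) (hα : 0 < α) (hb : 0 < b) :
    Filter.Tendsto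
      (fun n : ℕ =>
        Real.log (Real.Gamma ((n : ℝ) * α + Real.sqrt n * b * t))
          - Real.log (Real.Gamma ((n : ℝ) * α))
          - Real.sqrt n * b * t * Real.log ((n : ℝ) * α))
      Filter.atTop (nhds (b ^ 2 * t ^ 2 / (2 * α))) := by
  rcases eq_or_ne t 0 with rfl | ht
  · simp only [mul_zero, add_zero, sub_self, zero_mul, zero_sub, neg_zero]
    have : b ^ 2 * (0:ℝ) ^ 2 / (2 * α) = 0 := by ring
    rw [this]
    simpa using tendsto_const_nhds (x := (0:ℝ)) (f := atTop (α := ℕ))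
  · have hAt := hA α b t hα hb.ne' ht
    have hBt := hB α b t hα hb.ne' ht
    have hmin := hBt.min hAt
    have hmax := hBt.max hAt
    rw [min_self] at hmin
    rw [max_self] at hmax
    apply tendsto_of_tendsto_of_tendsto_of_le_of_le' hmin hmax
    · filter_upwards [ev_bounds α b t hα hb.ne' ht] with n ⟨h1, h2⟩
      have hx : (2:ℝ) ≤ (n:ℝ)*α := by linarith
      have hy : (2:ℝ) ≤ (n:ℝ)*α + Real.sqrt n * b * t := by
        have := neg_abs_le (Real.sqrt n * b * t); linarith
      have := (key_ineq hx hy).1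
      rw [min_sub_sub_right]
      simp only [Function.comp_apply] at this
      linarith [this]
    · filter_upwards [ev_bounds α b t hα hb.ne' ht] with n ⟨h1, h2⟩
      have hx : (2:ℝ) ≤ (n:ℝ)*α := by linarith
      have hy : (2:ℝ) ≤ (n:ℝ)*α + Real.sqrt n * b * t := by
        have := neg_abs_le (Real.sqrt n * b * t); linarith
      have := (key_ineq hx hy).2
      rw [max_sub_sub_right]
      simp only [Function.comp_apply] at this
      linarith [this]
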